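/- arXiv:1705.04648 — 2 statements merged into one kernel-verified Lean document; each statement's English description precedes it below -/
import Mathlib

section
/- The only positive fixed point of S_{2,-4} is 1, and the only cycle of length greater than 1 is (6, 14): S_{2,-4}(6)=14 and S_{2,-4}(14)=6. -/
/-- The value of a digit list `L = [a₀, a₁, …, aₙ]` in base `b`: `Σ aᵢ bⁱ`. -/
def baseVal (b : ℤ) : List ℤ → ℤ
  | [] => 0
  | d :: L => d + b * baseVal b L

/-- `L` is the base-`b` digit expansion of `a`: digits in `[0, |b|-1]`,
leading (last) digit nonzero, with value `a`. -/
def IsDigitExpansion (b a : ℤ) (L : List ℤ) : Prop :=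
  (∀ d ∈ L, 0 ≤ d ∧ d ≤ |b| - 1) ∧ L ≠ [] ∧ L.getLast! ≠ 0 ∧ baseVal b L = a

/-- `S` is the function `S_{e,b}` sending `a` to the sum of `e`-th powers of its
base-`b` digits (and `0` to `0`). -/
def IsPowSumFun (e : ℕ) (b : ℤ) (S : ℤ → ℤ) : Prop :=
  S 0 = 0 ∧ ∀ a L, IsDigitExpansion b a L → S a = (L.map (· ^ e)).sum

/-- auxiliary: x eventually reaches the set {1, 6, 14} under S -/
def ReachT (S : ℤ → ℤ) (x : ℤ) : Prop :=
  ∃ j : ℕ, S^[j] x = 1 ∨ S^[j] x = 6 ∨ S^[j] x = 14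

lemma getLast!_concat' (L : List ℤ) (d : ℤ) : (L ++ [d]).getLast! = d :=
  List.getLast!_of_getLast? (by simp)

lemma getLast!_cons' (d : ℤ) (L : List ℤ) (h : L ≠ []) : (d :: L).getLast! = L.getLast! := by
  cases L with
  | nil => exact absurd rfl h
  | cons a t => cases t <;> simp only [List.getLast!_cons_eq_getLastD, List.getLastD_cons, List.getLastD_nil]

lemma baseVal_concat (L : List ℤ) (d : ℤ) :
    baseVal (-4) (L ++ [d]) = baseVal (-4) L + (-4) ^ L.length * d := by
  induction L with
  | nil => simp [baseVal]
  | cons a t ih =>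
    rw [List.cons_append]
    simp only [baseVal, List.length_cons]
    rw [ih, pow_succ]
    ring

lemma baseVal_bounds (L : List ℤ) (h : ∀ d ∈ L, 0 ≤ d ∧ d ≤ 3) :
    -(4 ^ (L.length + 1) - 4) ≤ 5 * baseVal (-4) L ∧
      5 * baseVal (-4) L ≤ 4 ^ (L.length + 1) - 1 := by
  induction L with
  | nil => simp [baseVal]
  | cons a t ih =>
    have ha := h a (by simp)
    have ht := ih (fun x hx => h x (List.mem_cons_of_mem _ hx))
    have hp : (0:ℤ) < 4 ^ (t.length + 1) := by positivity
    simp only [baseVal, List.length_cons]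
    have e : (4:ℤ) ^ (t.length + 1 + 1) = 4 * 4 ^ (t.length + 1) := by ring
    rw [e]
    constructor <;> linarith [ht.1, ht.2, ha.1, ha.2]

lemma sumsq_le (L : List ℤ) (h : ∀ d ∈ L, 0 ≤ d ∧ d ≤ 3) :
    (L.map (· ^ 2)).sum ≤ 9 * (L.length : ℤ) := by
  induction L with
  | nil => simp
  | cons a t ih =>
    have ha := h a (by simp)
    have ht := ih (fun x hx => h x (List.mem_cons_of_mem _ hx))
    simp only [List.map_cons, List.sum_cons, List.length_cons]
    push_cast
    nlinarith [ha.1, ha.2]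

lemma sumsq_nonneg (L : List ℤ) : 0 ≤ (L.map (· ^ 2)).sum := by
  apply List.sum_nonneg
  intro x hx
  obtain ⟨y, _, rfl⟩ := List.mem_map.1 hx
  positivity

lemma one_le_sumsq (L : List ℤ) (h0 : ∀ d ∈ L, 0 ≤ d ∧ d ≤ 3) (hne : L ≠ [])
    (hl : L.getLast! ≠ 0) : 1 ≤ (L.map (· ^ 2)).sum := by
  obtain ⟨L', d, rfl⟩ := L.eq_nil_or_concat'.resolve_left hne
  rw [getLast!_concat'] at hl
  have hd := h0 d (by simp)
  have h1 : (0:ℤ) ≤ (L'.map (· ^ 2)).sum := sumsq_nonneg L'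
  simp only [List.map_append, List.sum_append, List.map_cons, List.map_nil, List.sum_cons,
    List.sum_nil]
  have hd1 : 1 ≤ d := by omega
  nlinarith [hd1]

lemma exists_expansion (n : ℕ) : ∀ a : ℤ, a.natAbs ≤ n → a ≠ 0 →
    ∃ L, IsDigitExpansion (-4) a L := by
  induction n using Nat.strong_induction_on with
  | _ n ih =>
    intro a han ha0
    by_cases hm1 : a = -1
    · subst hm1
      exact ⟨[3, 1], by refine ⟨?_,?_,?_,?_⟩ <;> decide⟩
    · have habs : |(-4:ℤ)| - 1 = 3 := by norm_num
      by_cases hq0 : -(a / 4) = 0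
      · refine ⟨[a % 4], ?_, by simp, ?_, ?_⟩
        · intro d hd
          simp only [List.mem_singleton] at hd
          subst hd
          rw [habs]
          omega
        · simp only [List.getLast!_cons_eq_getLastD, List.getLastD_nil]
          omega
        · simp only [baseVal]
          omega
      · have hlt : (-(a / 4)).natAbs < n := by omega
        obtain ⟨L', hd', hne', hl', hv'⟩ := ih (-(a / 4)).natAbs hlt (-(a / 4)) le_rfl hq0
        refine ⟨a % 4 :: L', ?_, by simp, ?_, ?_⟩
        · intro d hd
          rcases List.mem_cons.1 hd with rfl | hd
          · rw [habs]; omega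
          · exact hd' d hd
        · rw [getLast!_cons' _ _ hne']
          exact hl'
        · simp only [baseVal]
          rw [hv']
          omega

lemma pow_ge (k : ℕ) : 45 * ((k:ℤ) + 5) ≤ 4 ^ (k + 4) := by
  induction k with
  | zero => norm_num
  | succ k ih =>
    have hp : (0:ℤ) < 4 ^ (k + 4) := by positivity
    have e : (4:ℤ) ^ (k + 1 + 4) = 4 * 4 ^ (k + 4) := by ring
    rw [e]
    push_cast
    push_cast at ih
    linarith

lemma S_bound (S : ℤ → ℤ) (hS : IsPowSumFun 2 (-4) S) (a : ℤ) (ha : 0 < a) :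
    1 ≤ S a ∧ (S a ≤ 36 ∨ S a < a) := by
  obtain ⟨L, hd0, hne, hlast, hval⟩ := exists_expansion a.natAbs a le_rfl (by omega)
  have habs : |(-4:ℤ)| - 1 = 3 := by norm_num
  have hd : ∀ d ∈ L, 0 ≤ d ∧ d ≤ 3 := fun d hdm => by
    have := hd0 d hdm; rw [habs] at this; exact this
  have hSa : S a = (L.map (· ^ 2)).sum := hS.2 a L ⟨hd0, hne, hlast, hval⟩
  have h1 : 1 ≤ S a := by rw [hSa]; exact one_le_sumsq L hd hne hlast
  refine ⟨h1, ?_⟩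
  have hsum := sumsq_le L hd
  by_cases hn : L.length ≤ 4
  · left
    have hc : (L.length : ℤ) ≤ 4 := by exact_mod_cast hn
    rw [hSa]
    linarith
  · right
    push_neg at hn
    obtain ⟨L', d, rfl⟩ := L.eq_nil_or_concat'.resolve_left hne
    rw [getLast!_concat'] at hlast
    have hdd := hd d (by simp)
    have hb := baseVal_bounds L' (fun x hx => hd x (by simp [hx]))
    have hval' : a = baseVal (-4) L' + (-4) ^ L'.length * d := by
      rw [← hval, baseVal_concat]
    have hlen : (L' ++ [d]).length = L'.length + 1 := by simp
    have hk4 : 4 ≤ L'.length := by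
      rw [hlen] at hn; omega
    have hp : (0:ℤ) < 4 ^ L'.length := by positivity
    have hd1 : 1 ≤ d := by omega
    have h5a : 4 ^ L'.length + 4 ≤ 5 * a := by
      have e : (4:ℤ) ^ (L'.length + 1) = 4 * 4 ^ L'.length := by ring
      rcases Nat.even_or_odd L'.length with he | ho
      · have hneg : ((-4:ℤ)) ^ L'.length = 4 ^ L'.length := he.neg_pow 4
        rw [hneg] at hval'
        rw [e] at hb
        nlinarith [hb.1, hb.2]
      · exfalso
        have hneg : ((-4:ℤ)) ^ L'.length = -(4 ^ L'.length) := ho.neg_pow 4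
        rw [hneg] at hval'
        rw [e] at hb
        nlinarith [hb.1, hb.2]
    obtain ⟨j, hj⟩ := Nat.exists_eq_add_of_le hk4
    have hpg := pow_ge j
    have epow : (4:ℤ) ^ L'.length = 4 ^ (j + 4) := by rw [hj, Nat.add_comm]
    have hlc : ((L' ++ [d]).length : ℤ) = (L'.length : ℤ) + 1 := by
      rw [hlen]; push_cast; ring
    have hjl : (L'.length : ℤ) = (j : ℤ) + 4 := by rw [hj]; push_cast; ring
    rw [hSa]
    rw [hlc, hjl] at hsum
    rw [epow] at h5a
    linarith

theorem cycles_base_neg_four (S : ℤ → ℤ) (hS : IsPowSumFun 2 (-4) S) :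
    (∀ a : ℤ, 0 < a → (S a = a ↔ a = 1)) ∧
      S 6 = 14 ∧ S 14 = 6 ∧
      (∀ a : ℤ, 0 < a → ∀ m : ℕ, 1 ≤ m → S^[m] a = a →
        a = 1 ∨ a = 6 ∨ a = 14) := by
  have e1 : S 1 = 1 := by
    rw [hS.2 1 [1] (by refine ⟨?_,?_,?_,?_⟩ <;> decide)]; norm_num
  have e2 : S 2 = 4 := by
    rw [hS.2 2 [2] (by refine ⟨?_,?_,?_,?_⟩ <;> decide)]; norm_num
  have e3 : S 3 = 9 := by
    rw [hS.2 3 [3] (by refine ⟨?_,?_,?_,?_⟩ <;> decide)]; norm_num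
  have e4 : S 4 = 10 := by
    rw [hS.2 4 [0,3,1] (by refine ⟨?_,?_,?_,?_⟩ <;> decide)]; norm_num
  have e5 : S 5 = 11 := by
    rw [hS.2 5 [1,3,1] (by refine ⟨?_,?_,?_,?_⟩ <;> decide)]; norm_num
  have e6 : S 6 = 14 := by
    rw [hS.2 6 [2,3,1] (by refine ⟨?_,?_,?_,?_⟩ <;> decide)]; norm_num
  have e7 : S 7 = 19 := by
    rw [hS.2 7 [3,3,1] (by refine ⟨?_,?_,?_,?_⟩ <;> decide)]; norm_num
  have e8 : S 8 = 5 := by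
    rw [hS.2 8 [0,2,1] (by refine ⟨?_,?_,?_,?_⟩ <;> decide)]; norm_num
  have e9 : S 9 = 6 := by
    rw [hS.2 9 [1,2,1] (by refine ⟨?_,?_,?_,?_⟩ <;> decide)]; norm_num
  have e10 : S 10 = 9 := by
    rw [hS.2 10 [2,2,1] (by refine ⟨?_,?_,?_,?_⟩ <;> decide)]; norm_num
  have e11 : S 11 = 14 := by
    rw [hS.2 11 [3,2,1] (by refine ⟨?_,?_,?_,?_⟩ <;> decide)]; norm_num
  have e12 : S 12 = 2 := by
    rw [hS.2 12 [0,1,1] (by refine ⟨?_,?_,?_,?_⟩ <;> decide)]; norm_num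
  have e13 : S 13 = 3 := by
    rw [hS.2 13 [1,1,1] (by refine ⟨?_,?_,?_,?_⟩ <;> decide)]; norm_num
  have e14 : S 14 = 6 := by
    rw [hS.2 14 [2,1,1] (by refine ⟨?_,?_,?_,?_⟩ <;> decide)]; norm_num
  have e15 : S 15 = 11 := by
    rw [hS.2 15 [3,1,1] (by refine ⟨?_,?_,?_,?_⟩ <;> decide)]; norm_num
  have e16 : S 16 = 1 := by
    rw [hS.2 16 [0,0,1] (by refine ⟨?_,?_,?_,?_⟩ <;> decide)]; norm_num
  have e17 : S 17 = 2 := by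
    rw [hS.2 17 [1,0,1] (by refine ⟨?_,?_,?_,?_⟩ <;> decide)]; norm_num
  have e18 : S 18 = 5 := by
    rw [hS.2 18 [2,0,1] (by refine ⟨?_,?_,?_,?_⟩ <;> decide)]; norm_num
  have e19 : S 19 = 10 := by
    rw [hS.2 19 [3,0,1] (by refine ⟨?_,?_,?_,?_⟩ <;> decide)]; norm_num
  have e20 : S 20 = 13 := by
    rw [hS.2 20 [0,3,2] (by refine ⟨?_,?_,?_,?_⟩ <;> decide)]; norm_num
  have e21 : S 21 = 14 := by
    rw [hS.2 21 [1,3,2] (by refine ⟨?_,?_,?_,?_⟩ <;> decide)]; norm_num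
  have e22 : S 22 = 17 := by
    rw [hS.2 22 [2,3,2] (by refine ⟨?_,?_,?_,?_⟩ <;> decide)]; norm_num
  have e23 : S 23 = 22 := by
    rw [hS.2 23 [3,3,2] (by refine ⟨?_,?_,?_,?_⟩ <;> decide)]; norm_num
  have e24 : S 24 = 8 := by
    rw [hS.2 24 [0,2,2] (by refine ⟨?_,?_,?_,?_⟩ <;> decide)]; norm_num
  have e25 : S 25 = 9 := by
    rw [hS.2 25 [1,2,2] (by refine ⟨?_,?_,?_,?_⟩ <;> decide)]; norm_num
  have e26 : S 26 = 12 := by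
    rw [hS.2 26 [2,2,2] (by refine ⟨?_,?_,?_,?_⟩ <;> decide)]; norm_num
  have e27 : S 27 = 17 := by
    rw [hS.2 27 [3,2,2] (by refine ⟨?_,?_,?_,?_⟩ <;> decide)]; norm_num
  have e28 : S 28 = 5 := by
    rw [hS.2 28 [0,1,2] (by refine ⟨?_,?_,?_,?_⟩ <;> decide)]; norm_num
  have e29 : S 29 = 6 := by
    rw [hS.2 29 [1,1,2] (by refine ⟨?_,?_,?_,?_⟩ <;> decide)]; norm_num
  have e30 : S 30 = 9 := by
    rw [hS.2 30 [2,1,2] (by refine ⟨?_,?_,?_,?_⟩ <;> decide)]; norm_num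
  have e31 : S 31 = 14 := by
    rw [hS.2 31 [3,1,2] (by refine ⟨?_,?_,?_,?_⟩ <;> decide)]; norm_num
  have e32 : S 32 = 4 := by
    rw [hS.2 32 [0,0,2] (by refine ⟨?_,?_,?_,?_⟩ <;> decide)]; norm_num
  have e33 : S 33 = 5 := by
    rw [hS.2 33 [1,0,2] (by refine ⟨?_,?_,?_,?_⟩ <;> decide)]; norm_num
  have e34 : S 34 = 8 := by
    rw [hS.2 34 [2,0,2] (by refine ⟨?_,?_,?_,?_⟩ <;> decide)]; norm_num
  have e35 : S 35 = 13 := by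
    rw [hS.2 35 [3,0,2] (by refine ⟨?_,?_,?_,?_⟩ <;> decide)]; norm_num
  have e36 : S 36 = 18 := by
    rw [hS.2 36 [0,3,3] (by refine ⟨?_,?_,?_,?_⟩ <;> decide)]; norm_num
  have hstep : ∀ x y : ℤ, S x = y → ReachT S y → ReachT S x := by
    rintro x y hxy ⟨j, hj⟩
    exact ⟨j + 1, by rw [Function.iterate_succ_apply, hxy]; exact hj⟩
  have r1 : ReachT S 1 := ⟨0, Or.inl rfl⟩
  have r6 : ReachT S 6 := ⟨0, Or.inr (Or.inl rfl)⟩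
  have r14 : ReachT S 14 := ⟨0, Or.inr (Or.inr rfl)⟩
  have r9 : ReachT S 9 := hstep 9 6 e9 r6
  have r11 : ReachT S 11 := hstep 11 14 e11 r14
  have r16 : ReachT S 16 := hstep 16 1 e16 r1
  have r21 : ReachT S 21 := hstep 21 14 e21 r14
  have r29 : ReachT S 29 := hstep 29 6 e29 r6
  have r31 : ReachT S 31 := hstep 31 14 e31 r14
  have r3 : ReachT S 3 := hstep 3 9 e3 r9
  have r5 : ReachT S 5 := hstep 5 11 e5 r11
  have r10 : ReachT S 10 := hstep 10 9 e10 r9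
  have r15 : ReachT S 15 := hstep 15 11 e15 r11
  have r25 : ReachT S 25 := hstep 25 9 e25 r9
  have r30 : ReachT S 30 := hstep 30 9 e30 r9
  have r4 : ReachT S 4 := hstep 4 10 e4 r10
  have r8 : ReachT S 8 := hstep 8 5 e8 r5
  have r13 : ReachT S 13 := hstep 13 3 e13 r3
  have r18 : ReachT S 18 := hstep 18 5 e18 r5
  have r19 : ReachT S 19 := hstep 19 10 e19 r10
  have r28 : ReachT S 28 := hstep 28 5 e28 r5
  have r33 : ReachT S 33 := hstep 33 5 e33 r5
  have r2 : ReachT S 2 := hstep 2 4 e2 r4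
  have r7 : ReachT S 7 := hstep 7 19 e7 r19
  have r20 : ReachT S 20 := hstep 20 13 e20 r13
  have r24 : ReachT S 24 := hstep 24 8 e24 r8
  have r32 : ReachT S 32 := hstep 32 4 e32 r4
  have r34 : ReachT S 34 := hstep 34 8 e34 r8
  have r35 : ReachT S 35 := hstep 35 13 e35 r13
  have r36 : ReachT S 36 := hstep 36 18 e36 r18
  have r12 : ReachT S 12 := hstep 12 2 e12 r2
  have r17 : ReachT S 17 := hstep 17 2 e17 r2
  have r22 : ReachT S 22 := hstep 22 17 e22 r17
  have r26 : ReachT S 26 := hstep 26 12 e26 r12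
  have r27 : ReachT S 27 := hstep 27 17 e27 r17
  have r23 : ReachT S 23 := hstep 23 22 e23 r22
  have hreach : ∀ x : ℤ, 0 < x → ReachT S x := by
    have main : ∀ n : ℕ, ∀ x : ℤ, 0 < x → x.toNat ≤ n → ReachT S x := by
      intro n
      induction n using Nat.strong_induction_on with
      | _ n ih =>
        intro x hx hxn
        by_cases h36 : x ≤ 36
        · interval_cases x
          all_goals first | exact r1 | exact r2 | exact r3 | exact r4 | exact r5 | exact r6 | exact r7 | exact r8 | exact r9 | exact r10 | exact r11 | exact r12 | exact r13 | exact r14 | exact r15 | exact r16 | exact r17 | exact r18 | exact r19 | exact r20 | exact r21 | exact r22 | exact r23 | exact r24 | exact r25 | exact r26 | exact r27 | exact r28 | exact r29 | exact r30 | exact r31 | exact r32 | exact r33 | exact r34 | exact r35 | exact r36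
        · obtain ⟨hb1, hb2⟩ := S_bound S hS x hx
          have hlt : S x < x := by rcases hb2 with h | h <;> omega
          exact hstep x (S x) rfl (ih (S x).toNat (by omega) (S x) (by omega) le_rfl)
    intro x hx
    exact main x.toNat x hx le_rfl
  have hclosed : ∀ (j : ℕ) (y : ℤ), (y = 1 ∨ y = 6 ∨ y = 14) →
      (S^[j] y = 1 ∨ S^[j] y = 6 ∨ S^[j] y = 14) := by
    intro j
    induction j with
    | zero => exact fun y h => h
    | succ j ihj =>
      intro y hy
      rw [Function.iterate_succ_apply]
      apply ihj
      rcases hy with rfl | rfl | rfl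
      · rw [e1]; exact Or.inl rfl
      · rw [e6]; exact Or.inr (Or.inr rfl)
      · rw [e14]; exact Or.inr (Or.inl rfl)
  refine ⟨?_, e6, e14, ?_⟩
  · intro a ha
    constructor
    · intro hfix
      have hb := S_bound S hS a ha
      have h36 : a ≤ 36 := by rcases hb.2 with h | h <;> omega
      interval_cases a <;> omega
    · rintro rfl
      exact e1
  · intro a ha m hm hma
    obtain ⟨j, hj⟩ := hreach a ha
    have hmt : ∀ t : ℕ, S^[m * t] a = a := by
      intro t
      induction t with
      | zero => simp
      | succ t iht =>
        rw [Nat.mul_succ, Function.iterate_add_apply, hma, iht]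
    have hge : j ≤ m * j := Nat.le_mul_of_pos_left j hm
    have hsplit : S^[m * j] a = S^[m * j - j] (S^[j] a) := by
      rw [← Function.iterate_add_apply]
      congr 1
      omega
    have := hclosed (m * j - j) (S^[j] a) hj
    rw [← hsplit, hmt j] at this
    exact this
end

section
/- Fix e ≥ 2 and b ≤ -2, and let T be a finite set of positive integers. If F is a finite composition of the functions S_{e,b} and I (where I(t) = t+1), and F(T) is (e,b)-good, then T is (e,b)-good. -/
/-- A finite set `T` of positive integers is `(e,b)`-good (for the digit power-sum
function `S`): for each `u` in a cycle of `S`, there are `n, k ≥ 1` with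
`S^[k] (t + n) = u` for all `t ∈ T`. -/
def Good (S : ℤ → ℤ) (T : Finset ℤ) : Prop :=
  ∀ u : ℤ, 0 < u → (∃ m : ℕ, 1 ≤ m ∧ S^[m] u = u) →
    ∃ n : ℤ, 0 < n ∧ ∃ k : ℕ, 1 ≤ k ∧ ∀ t ∈ T, S^[k] (t + n) = u

/- ### auxiliary list lemmas -/

lemma getLast!_append_aux (L M : List ℤ) (h : M ≠ []) :
    (L ++ M).getLast! = M.getLast! := by
  rw [List.getLast!_of_getLast? (a := M.getLast h)
      (by rw [List.getLast?_append, List.getLast?_eq_getLast h]; rfl),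
    List.getLast!_of_getLast? (List.getLast?_eq_getLast h)]

lemma getLast!_mem_aux (L : List ℤ) (h : L ≠ []) : L.getLast! ∈ L := by
  rw [List.getLast!_of_getLast? (List.getLast?_eq_getLast h)]
  exact List.getLast_mem h

lemma baseVal_append (b : ℤ) (L1 L2 : List ℤ) :
    baseVal b (L1 ++ L2) = baseVal b L1 + b ^ L1.length * baseVal b L2 := by
  induction L1 with
  | nil => simp [baseVal]
  | cons d L ih => simp [baseVal, ih, List.length_cons]; ring

lemma baseVal_replicate_zero (b : ℤ) (m : ℕ) :
    baseVal b (List.replicate m 0) = 0 := by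
  induction m with
  | zero => rfl
  | succ m ih => simp [List.replicate_succ, baseVal, ih]

/- ### the pattern list with n+1 ones at even positions -/

def pat : ℕ → List ℤ
  | 0 => [1]
  | n + 1 => 1 :: 0 :: pat n

lemma pat_ne_nil (n : ℕ) : pat n ≠ [] := by
  cases n <;> simp [pat]

lemma pat_getLast! (n : ℕ) : (pat n).getLast! = 1 := by
  induction n with
  | zero => rfl
  | succ n ih =>
    have : pat (n+1) = [1, 0] ++ pat n := rfl
    rw [this, getLast!_append_aux _ _ (pat_ne_nil n), ih]

lemma pat_mem (n : ℕ) : ∀ d ∈ pat n, d = 0 ∨ d = 1 := by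
  induction n with
  | zero => simp [pat]
  | succ n ih => simp [pat]; tauto

lemma pat_baseVal_pos (b : ℤ) (hb : b ≤ -2) (n : ℕ) : 0 < baseVal b (pat n) := by
  induction n with
  | zero => simp [pat, baseVal]
  | succ n ih =>
    have : baseVal b (pat (n+1)) = 1 + b ^ 2 * baseVal b (pat n) := by
      simp [pat, baseVal]; ring
    rw [this]
    nlinarith [sq_nonneg b]

lemma pat_powsum (e : ℕ) (he : 1 ≤ e) (n : ℕ) :
    ((pat n).map (· ^ e)).sum = (n : ℤ) + 1 := by
  induction n with
  | zero => simp [pat]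
  | succ n ih =>
    simp [pat, ih, zero_pow (by omega : e ≠ 0)]
    push_cast; ring

/- ### existence of negabase expansions -/

lemma exists_expansion_s17 (b : ℤ) (hb : b ≤ -2) (a : ℤ) (ha : a ≠ 0) :
    ∃ L, IsDigitExpansion b a L := by
  have habs : |b| = -b := abs_of_neg (by omega)
  suffices H : ∀ N : ℕ, ∀ a : ℤ, a.natAbs ≤ N → a ≠ 0 → ∃ L, IsDigitExpansion b a L from
    H a.natAbs a le_rfl ha
  intro N
  induction N using Nat.strong_induction_on with
  | _ N ih =>
    intro a haN ha
    by_cases h1 : a = -1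
    · refine ⟨[-b - 1, 1], ?_, by simp, ?_, ?_⟩
      · intro d hd
        simp at hd
        rcases hd with rfl | rfl <;> omega
      · show (1:ℤ) ≠ 0
        norm_num
      · simp [baseVal, h1]; ring
    · have hB : (0:ℤ) < -b := by omega
      have hr0 : 0 ≤ a % (-b) := Int.emod_nonneg a (by omega)
      have hr1 : a % (-b) < -b := Int.emod_lt_of_pos a hB
      have hmod := Int.mul_ediv_add_emod a (-b)
      set r := a % (-b) with hrdef
      set q : ℤ := -(a / (-b)) with hqdef
      have key : a = r + b * q := by
        rw [hqdef]; ring_nf; linarith [hmod]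
      by_cases hq0 : q = 0
      · have hra : r = a := by
          have : b * q = 0 := by rw [hq0, mul_zero]
          omega
        refine ⟨[r], ?_, by simp, ?_, ?_⟩
        · intro d hd; simp at hd; subst hd; omega
        · show r ≠ 0
          omega
        · show r + b * 0 = a
          omega
      · have hlt : q.natAbs < a.natAbs := by
          rcases lt_or_gt_of_ne ha with hneg | hpos
          · -- a < 0, a ≤ -2
            have ha2 : a ≤ -2 := by omega
            have hq_pos : 0 < q := by
              by_contra h
              push_neg at h
              have : 0 ≤ b * q := by nlinarith
              omega
            have : q < -a := by nlinarith [key]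
            omega
          · have hd0 : 0 ≤ a / (-b) := Int.ediv_nonneg (by omega) (by omega)
            have hd1 : a / (-b) < a := by nlinarith [hmod, hr0, hd0]
            omega
        obtain ⟨L', hd', hne', hlast', hval'⟩ :=
          ih q.natAbs (lt_of_lt_of_le hlt haN) q le_rfl hq0
        refine ⟨r :: L', ?_, by simp, ?_, ?_⟩
        · intro d hd
          rcases List.mem_cons.1 hd with rfl | hd
          · omega
          · exact hd' d hd
        · show ([r] ++ L').getLast! ≠ 0
          rw [getLast!_append_aux _ _ hne']; exact hlast'
        · simp [baseVal, hval']; omega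

/- ### positivity of S -/

lemma S_pos (e : ℕ) (he : 2 ≤ e) (b : ℤ) (hb : b ≤ -2) (S : ℤ → ℤ)
    (hS : IsPowSumFun e b S) (a : ℤ) (ha : 0 < a) : 0 < S a := by
  obtain ⟨L, hd, hne, hlast, hval⟩ := exists_expansion_s17 b hb a (by omega)
  rw [hS.2 a L ⟨hd, hne, hlast, hval⟩]
  have hmem : L.getLast! ∈ L := getLast!_mem_aux L hne
  have h1 : (1:ℤ) ≤ L.getLast! ^ e := by
    have := hd _ hmem
    calc (1:ℤ) = 1 ^ e := (one_pow e).symm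
    _ ≤ L.getLast! ^ e := pow_le_pow_left₀ (by norm_num) (by omega) e
  have hmem' : L.getLast! ^ e ∈ L.map (· ^ e) := List.mem_map_of_mem hmem
  have hnonneg : ∀ x ∈ L.map (· ^ e), (0:ℤ) ≤ x := by
    intro x hx
    obtain ⟨d, hdm, rfl⟩ := List.mem_map.1 hx
    exact pow_nonneg (hd d hdm).1 e
  have := List.single_le_sum hnonneg _ hmem'
  omega

/- ### the key construction: shifting S by a constant -/

lemma step_S (e : ℕ) (he : 2 ≤ e) (b : ℤ) (hb : b ≤ -2) (S : ℤ → ℤ)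
    (hS : IsPowSumFun e b S) (A : Finset ℤ) (hA : ∀ a ∈ A, 0 < a)
    (n : ℤ) (hn : 0 < n) :
    ∃ n' : ℤ, 0 < n' ∧ ∀ a ∈ A, S (a + n') = S a + n := by
  have habs : |b| = -b := abs_of_neg (by omega)
  have hexp : ∀ a ∈ A, ∃ L, IsDigitExpansion b a L := fun a ha =>
    exists_expansion_s17 b hb a (by have := hA a ha; omega)
  choose! L hL using hexp
  set M := A.sup fun a => (L a).length with hM
  set m := 2 * M with hm
  set P := pat (n.toNat - 1) with hP
  have hV : 0 < baseVal b P := pat_baseVal_pos b hb _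
  have hbm : 0 < b ^ m := by
    rw [hm, pow_mul]
    exact pow_pos (by nlinarith) M
  refine ⟨b ^ m * baseVal b P, mul_pos hbm hV, ?_⟩
  intro a ha
  obtain ⟨hdig, hne, hlast, hval⟩ := hL a ha
  have hlen : (L a).length ≤ m := by
    have h := Finset.le_sup (f := fun a => (L a).length) ha
    calc (L a).length ≤ M := h
    _ ≤ m := by omega
  set Z := List.replicate (m - (L a).length) (0:ℤ) with hZ
  have hexp' : IsDigitExpansion b (a + b ^ m * baseVal b P) (L a ++ (Z ++ P)) := by
    refine ⟨?_, by simp [hne], ?_, ?_⟩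
    · intro d hd
      rcases List.mem_append.1 hd with hd | hd
      · exact hdig d hd
      · rcases List.mem_append.1 hd with hd | hd
        · have := List.eq_of_mem_replicate hd
          subst this; omega
        · rcases pat_mem _ d hd with rfl | rfl <;> omega
    · rw [getLast!_append_aux _ _ (by simp [pat_ne_nil, hP]),
        getLast!_append_aux _ _ (pat_ne_nil _), pat_getLast!]
      norm_num
    · rw [baseVal_append, baseVal_append, hval, hZ, baseVal_replicate_zero,
        List.length_replicate]
      rw [zero_add, ← mul_assoc, ← pow_add,
        show (L a).length + (m - (L a).length) = m by omega]
  rw [hS.2 _ _ hexp', hS.2 a (L a) ⟨hdig, hne, hlast, hval⟩]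
  rw [List.map_append, List.map_append, List.sum_append, List.sum_append]
  have hZsum : ((Z.map (· ^ e)).sum : ℤ) = 0 := by
    rw [hZ, List.map_replicate, zero_pow (by omega : e ≠ 0), List.sum_replicate]
    simp
  have hPsum : ((P.map (· ^ e)).sum : ℤ) = n := by
    rw [hP, pat_powsum e (by omega)]
    omega
  rw [hZsum, hPsum]; ring

/- ### one-step pullback -/

lemma pull_one (e : ℕ) (he : 2 ≤ e) (b : ℤ) (hb : b ≤ -2) (S : ℤ → ℤ)
    (hS : IsPowSumFun e b S) (A : Finset ℤ) (hA : ∀ a ∈ A, 0 < a)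
    (f : ℤ → ℤ) (hf : f = S ∨ f = fun t => t + 1)
    (h : Good S (A.image f)) : Good S A := by
  intro u hu hcyc
  obtain ⟨n, hn, k, hk, hall⟩ := h u hu hcyc
  rcases hf with hf | hf
  · obtain ⟨n', hn', hstep⟩ := step_S e he b hb S hS A hA n hn
    refine ⟨n', hn', k + 1, by omega, ?_⟩
    intro t ht
    rw [Function.iterate_succ_apply, hstep t ht]
    have h2 := hall (f t) (Finset.mem_image_of_mem f ht)
    rw [hf] at h2
    exact h2
  · refine ⟨n + 1, by omega, k, hk, ?_⟩
    intro t ht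
    have h2 := hall (f t) (Finset.mem_image_of_mem f ht)
    rw [hf] at h2
    rw [show t + (n + 1) = t + 1 + n by ring]
    exact h2

lemma foldr_pos (e : ℕ) (he : 2 ≤ e) (b : ℤ) (hb : b ≤ -2) (S : ℤ → ℤ)
    (hS : IsPowSumFun e b S) (fs : List (ℤ → ℤ))
    (hfs : ∀ f ∈ fs, f = S ∨ f = fun t => t + 1) :
    ∀ t : ℤ, 0 < t → 0 < (fs.foldr (· ∘ ·) id) t := by
  induction fs with
  | nil => intro t ht; simpa using ht
  | cons f rest ih =>
    intro t ht
    have h1 : 0 < (rest.foldr (· ∘ ·) id) t :=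
      ih (fun g hg => hfs g (List.mem_cons_of_mem _ hg)) t ht
    rw [List.foldr_cons]
    show 0 < f ((rest.foldr (· ∘ ·) id) t)
    rcases hfs f (List.mem_cons_self) with hf | hf
    · rw [hf]
      exact S_pos e he b hb S hS _ h1
    · simp only [hf]
      omega

theorem good_pullback (e : ℕ) (he : 2 ≤ e) (b : ℤ) (hb : b ≤ -2)
    (S : ℤ → ℤ) (hS : IsPowSumFun e b S)
    (T : Finset ℤ) (hT : ∀ t ∈ T, 0 < t)
    (fs : List (ℤ → ℤ)) (hfs : ∀ f ∈ fs, f = S ∨ f = fun t => t + 1)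
    (hgood : Good S (T.image (fs.foldr (· ∘ ·) id))) :
    Good S T := by
  induction fs with
  | nil => simpa [Finset.image_id] using hgood
  | cons f rest ih =>
    have hrest : ∀ g ∈ rest, g = S ∨ g = fun t => t + 1 := fun g hg =>
      hfs g (List.mem_cons_of_mem _ hg)
    apply ih hrest
    have himg : T.image ((f :: rest).foldr (· ∘ ·) id)
        = (T.image (rest.foldr (· ∘ ·) id)).image f := by
      rw [List.foldr_cons, Finset.image_image]
    rw [himg] at hgood
    exact pull_one e he b hb S hS _ (fun a haA => by
      obtain ⟨t, ht, rfl⟩ := Finset.mem_image.1 haA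
      exact foldr_pos e he b hb S hS rest hrest t (hT t ht))
      f (hfs f (List.mem_cons_self)) hgood
end
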